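/- arXiv:2012.12941 — 9 statements merged into one kernel-verified Lean document; each statement's English description precedes it below -/
import Mathlib

section
/- Suppose every Υ_t is invertible and the Schur complement σ := −Σ_{t∈T} ρ_t·Υ_t⁻¹·ρ_tᵀ is an invertible m × m matrix. Define λ* := σ⁻¹·(Γ − Σ_{t∈T} ρ_t·Υ_t⁻¹·ζ_t) and, for each t ∈ T, ω*_t := Υ_t⁻¹·(ζ_t − ρ_tᵀ·λ*). Then ((ω*_t)_{t∈T}, λ*) solves the arrowhead KKT system: Υ_t·ω*_t + ρ_tᵀ·λ* = ζ_t for every t ∈ T, and Σ_{t∈T} ρ_t·ω*_t = Γ. -/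
open Matrix

/-- The Schur-complement factorisation and forward/backward substitution produce
a solution of the arrowhead KKT system. -/
theorem arrowhead_schur_solution
    {T n m : Type*} [Fintype T] [Fintype n] [Fintype m]
    [DecidableEq n] [DecidableEq m]
    (Υ : T → Matrix n n ℝ) (ρ : T → Matrix m n ℝ) (ζ : T → n → ℝ) (Γ : m → ℝ)
    (hΥ : ∀ t, IsUnit (Υ t).det)
    (hσ : IsUnit (-(∑ t, ρ t * (Υ t)⁻¹ * (ρ t)ᵀ)).det) :
    let σ : Matrix m m ℝ := -(∑ t, ρ t * (Υ t)⁻¹ * (ρ t)ᵀ)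
    let lamStar : m → ℝ :=
      σ⁻¹.mulVec (Γ - ∑ t, (ρ t).mulVec ((Υ t)⁻¹.mulVec (ζ t)))
    let ωStar : T → n → ℝ :=
      fun t => (Υ t)⁻¹.mulVec (ζ t - (ρ t)ᵀ.mulVec lamStar)
    (∀ t, (Υ t).mulVec (ωStar t) + (ρ t)ᵀ.mulVec lamStar = ζ t) ∧
      ∑ t, (ρ t).mulVec (ωStar t) = Γ := by
  intro σ lamStar ωStar
  have hcancel : ∀ t (v : n → ℝ), (Υ t).mulVec ((Υ t)⁻¹.mulVec v) = v := by
    intro t v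
    rw [Matrix.mulVec_mulVec, Matrix.mul_nonsing_inv _ (hΥ t), Matrix.one_mulVec]
  constructor
  · intro t
    simp only [ωStar, hcancel]
    abel
  · have hσcancel : σ * σ⁻¹ = 1 := Matrix.mul_nonsing_inv _ hσ
    have key : ∑ t, (ρ t).mulVec (ωStar t)
        = (∑ t, (ρ t).mulVec ((Υ t)⁻¹.mulVec (ζ t))) + σ.mulVec lamStar := by
      simp only [ωStar, σ]
      have hsum : (∑ t, ρ t * (Υ t)⁻¹ * (ρ t)ᵀ) *ᵥ lamStar
          = ∑ t, (ρ t * (Υ t)⁻¹ * (ρ t)ᵀ) *ᵥ lamStar :=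
        map_sum (⟨⟨fun A => A *ᵥ lamStar, Matrix.zero_mulVec _⟩,
          fun A B => Matrix.add_mulVec _ _ _⟩ : Matrix m m ℝ →+ (m → ℝ)) _ _
      rw [Matrix.neg_mulVec, hsum, ← sub_eq_add_neg, ← Finset.sum_sub_distrib]
      exact Finset.sum_congr rfl fun t _ => by
        simp [Matrix.mulVec_sub, ← Matrix.mulVec_mulVec]
    rw [key]
    simp only [lamStar]
    rw [Matrix.mulVec_mulVec, hσcancel, Matrix.one_mulVec]
    abel
end

section
/- For all i, m ∈ n_b, the partial derivative of the complex bus power injection S_i with respect to the angle θ_m exists and equals j·([i = m]·V_i·conj(I_i) − V_i·conj(Y_{i m})·conj(V_m)); i.e. the one-variable function t ↦ S_i computed from the angle vector obtained by replacing θ_m with t has derivative j·([i = m]·V_i·conj(I_i) − V_i·conj(Y_{i m})·conj(V_m)) at t = θ_m. (In matrix form this is the (i, m) entry of j·diag(V)·(diag(conj(I)) − conj(Y)·diag(conj(V))).) -/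
open Matrix

/-- Complex bus voltage `V_k = v_k · exp(j θ_k)`. -/
noncomputable def busV {nb : Type*} (v θ : nb → ℝ) (k : nb) : ℂ :=
  (v k : ℂ) * Complex.exp (Complex.I * (θ k : ℂ))

/-- Bus current injection `I_i = Σ_k Y_{i k} V_k`. -/
noncomputable def busI {nb : Type*} [Fintype nb] (Y : Matrix nb nb ℂ)
    (v θ : nb → ℝ) (i : nb) : ℂ :=
  ∑ k, Y i k * busV v θ k

/-- Complex bus power injection `S_i = V_i · conj(I_i)`. -/
noncomputable def busS {nb : Type*} [Fintype nb] (Y : Matrix nb nb ℂ)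
    (v θ : nb → ℝ) (i : nb) : ℂ :=
  busV v θ i * (starRingEnd ℂ) (busI Y v θ i)

lemma hasDerivAt_busV_angle {nb : Type*} [DecidableEq nb]
    (v θ : nb → ℝ) (m k : nb) :
    HasDerivAt (fun t : ℝ => busV v (Function.update θ m t) k)
      ((if k = m then Complex.I else 0) * busV v θ k) (θ m) := by
  by_cases hk : k = m
  · subst hk
    simp only [if_pos rfl]
    have h1 : HasDerivAt (fun z : ℂ => (v k : ℂ) * Complex.exp (Complex.I * z))
        (Complex.I * ((v k : ℂ) * Complex.exp (Complex.I * (θ k : ℂ)))) (θ k : ℂ) := by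
      have := ((Complex.hasDerivAt_exp (Complex.I * (θ k : ℂ))).comp (θ k : ℂ)
        ((hasDerivAt_id (θ k : ℂ)).const_mul Complex.I)).const_mul (v k : ℂ)
      simpa [mul_comm, mul_left_comm, mul_assoc] using this
    have h2 := h1.comp_ofReal
    have heq : (fun t : ℝ => busV v (Function.update θ k t) k)
        = fun t : ℝ => (v k : ℂ) * Complex.exp (Complex.I * (t : ℂ)) := by
      funext t; simp [busV]
    rw [heq]
    simpa [busV] using h2
  · simp only [if_neg hk, zero_mul]
    have heq : (fun t : ℝ => busV v (Function.update θ m t) k)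
        = fun _ : ℝ => busV v θ k := by
      funext t; simp [busV, Function.update_of_ne hk]
    rw [heq]
    exact hasDerivAt_const _ _

/-- Partial derivative of the complex bus power injection `S_i` with respect to
the voltage angle `θ_m`. -/
theorem hasDerivAt_busS_angle {nb : Type*} [Fintype nb] [DecidableEq nb]
    (Y : Matrix nb nb ℂ) (v θ : nb → ℝ) (i m : nb) :
    HasDerivAt (fun t : ℝ => busS Y v (Function.update θ m t) i)
      (Complex.I *
        ((if i = m then 1 else 0) * busV v θ i * (starRingEnd ℂ) (busI Y v θ i)
          - busV v θ i * (starRingEnd ℂ) (Y i m) * (starRingEnd ℂ) (busV v θ m)))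
      (θ m) := by
  have hI : HasDerivAt (fun t : ℝ => busI Y v (Function.update θ m t) i)
      (Y i m * (Complex.I * busV v θ m)) (θ m) := by
    have := HasDerivAt.fun_sum (u := Finset.univ)
      (A := fun k t => Y i k * busV v (Function.update θ m t) k)
      (A' := fun k => Y i k * ((if k = m then Complex.I else 0) * busV v θ k))
      (fun k _ => (hasDerivAt_busV_angle v θ m k).const_mul (Y i k))
    have hsum : ∑ k, Y i k * ((if k = m then Complex.I else 0) * busV v θ k)
        = Y i m * (Complex.I * busV v θ m) := by
      rw [Finset.sum_eq_single m]
      · simp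
      · intro k _ hkm; simp [hkm]
      · simp
    rw [hsum] at this
    simpa [busI] using this
  have hVi := hasDerivAt_busV_angle v θ m i
  have hconj := hI.star
  have hS := hVi.fun_mul hconj
  have heq : (fun t : ℝ => busV v (Function.update θ m t) i *
      star (busI Y v (Function.update θ m t) i))
      = fun t : ℝ => busS Y v (Function.update θ m t) i := by
    funext t; simp [busS]
  rw [heq] at hS
  convert hS using 1
  · rfl
  simp only [star_mul', RCLike.star_def, _root_.map_mul, Complex.conj_I]
  by_cases him : i = m <;> simp [him] <;> ring
end

section
/- For all i, m ∈ n_b, the partial derivative of the complex bus power injection S_i with respect to the voltage magnitude v_m exists and equals [i = m]·exp(j·θ_i)·conj(I_i) + V_i·conj(Y_{i m})·conj(exp(j·θ_m)); i.e. the one-variable function t ↦ S_i computed from the magnitude vector obtained by replacing v_m with t has this derivative at t = v_m. (In matrix form this is the (i, m) entry of diag(conj(I))·diag(F) + diag(V)·conj(Y)·diag(conj(F)), where F_k = exp(j·θ_k).) -/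
open Matrix

lemma hasDerivAt_busV_mag {nb : Type*} [DecidableEq nb] (v θ : nb → ℝ) (i m : nb) :
    HasDerivAt (fun t : ℝ => busV (Function.update v m t) θ i)
      ((if i = m then 1 else 0) * Complex.exp (Complex.I * (θ i : ℂ))) (v m) := by
  by_cases h : i = m
  · subst h
    simp only [busV, Function.update_self, if_pos rfl, one_mul]
    exact (Complex.ofRealCLM.hasDerivAt).mul_const _
  · simp only [busV, Function.update_of_ne h, if_neg h, zero_mul]
    exact hasDerivAt_const _ _

lemma hasDerivAt_busI_mag {nb : Type*} [Fintype nb] [DecidableEq nb]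
    (Y : Matrix nb nb ℂ) (v θ : nb → ℝ) (i m : nb) :
    HasDerivAt (fun t : ℝ => busI Y (Function.update v m t) θ i)
      (Y i m * Complex.exp (Complex.I * (θ m : ℂ))) (v m) := by
  have h : HasDerivAt (fun t : ℝ => busI Y (Function.update v m t) θ i)
      (∑ k, Y i k * ((if k = m then 1 else 0) * Complex.exp (Complex.I * (θ k : ℂ))))
      (v m) := by
    simp only [busI]
    exact HasDerivAt.fun_sum fun k _ => (hasDerivAt_busV_mag v θ k m).const_mul (Y i k)
  refine h.congr_deriv ?_
  rw [Finset.sum_eq_single m (fun k _ hk => by simp [hk]) (by simp)]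
  simp

/-- Partial derivative of the complex bus power injection `S_i` with respect to
the voltage magnitude `v_m`. -/
theorem hasDerivAt_busS_magnitude {nb : Type*} [Fintype nb] [DecidableEq nb]
    (Y : Matrix nb nb ℂ) (v θ : nb → ℝ) (i m : nb) :
    HasDerivAt (fun t : ℝ => busS Y (Function.update v m t) θ i)
      ((if i = m then 1 else 0) * Complex.exp (Complex.I * (θ i : ℂ)) *
          (starRingEnd ℂ) (busI Y v θ i)
        + busV v θ i * (starRingEnd ℂ) (Y i m) *
          (starRingEnd ℂ) (Complex.exp (Complex.I * (θ m : ℂ))))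
      (v m) := by
  have hf := hasDerivAt_busV_mag v θ i m
  have hg := (hasDerivAt_busI_mag Y v θ i m).star
  have h := hf.mul hg
  simp only [Function.update_eq_self] at h
  refine h.congr_deriv ?_
  simp only [star_mul', RCLike.star_def]
  ring
end

section
/- For all l ∈ n_l and m ∈ n_b, the partial derivative of the from-end complex line flow S^fr_l with respect to the angle θ_m exists and equals j·( C_{l m}·V_m·conj(I^fr_l) − (Σ_k C_{l k}·V_k)·conj((Y_f)_{l m})·conj(V_m) ); i.e. the one-variable function t ↦ S^fr_l computed from the angle vector obtained by replacing θ_m with t has this derivative at t = θ_m. -/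
open Matrix

/-- From-end line current `I^fr_l = Σ_k (Y_f)_{l k} V_k`. -/
noncomputable def lineIfr {nl nb : Type*} [Fintype nb] (Yf : Matrix nl nb ℂ)
    (v θ : nb → ℝ) (l : nl) : ℂ :=
  ∑ k, Yf l k * busV v θ k

/-- From-end complex line flow `S^fr_l = (Σ_k C_{l k} V_k) · conj(I^fr_l)`. -/
noncomputable def lineSfr {nl nb : Type*} [Fintype nb] (C Yf : Matrix nl nb ℂ)
    (v θ : nb → ℝ) (l : nl) : ℂ :=
  (∑ k, C l k * busV v θ k) * (starRingEnd ℂ) (lineIfr Yf v θ l)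

lemma sum_update_key {nl nb : Type*} [Fintype nb] [DecidableEq nb]
    (M : Matrix nl nb ℂ) (v θ : nb → ℝ) (l : nl) (m : nb) (t : ℝ) :
    ∑ k, M l k * busV v (Function.update θ m t) k
      = (∑ k, M l k * busV v θ k) - M l m * busV v θ m
          + M l m * ((v m : ℂ) * Complex.exp (Complex.I * (t : ℂ))) := by
  have h : ∀ k, M l k * busV v (Function.update θ m t) k
      = M l k * busV v θ k
        + (if k = m then
            M l m * ((v m : ℂ) * Complex.exp (Complex.I * (t : ℂ)))
              - M l m * busV v θ m else 0) := by
    intro k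
    by_cases h : k = m
    · subst h; simp [busV, Function.update_self]
    · simp [busV, Function.update_of_ne h, h]
  rw [Finset.sum_congr rfl fun k _ => h k, Finset.sum_add_distrib,
    Finset.sum_ite_eq' Finset.univ m]
  simp
  ring

/-- Partial derivative of the from-end complex line flow `S^fr_l` with respect
to the voltage angle `θ_m`. -/
theorem hasDerivAt_lineSfr_angle {nl nb : Type*} [Fintype nb] [DecidableEq nb]
    (C Yf : Matrix nl nb ℂ) (v θ : nb → ℝ) (l : nl) (m : nb) :
    HasDerivAt (fun t : ℝ => lineSfr C Yf v (Function.update θ m t) l)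
      (Complex.I *
        (C l m * busV v θ m * (starRingEnd ℂ) (lineIfr Yf v θ l)
          - (∑ k, C l k * busV v θ k) * (starRingEnd ℂ) (Yf l m) *
              (starRingEnd ℂ) (busV v θ m)))
      (θ m) := by
  classical
  set a : ℂ := (∑ k, C l k * busV v θ k) - C l m * busV v θ m with ha
  set c : ℂ := C l m * (v m : ℂ) with hc
  set b : ℂ := (starRingEnd ℂ) ((∑ k, Yf l k * busV v θ k) - Yf l m * busV v θ m) with hb
  set d : ℂ := (starRingEnd ℂ) (Yf l m) * (v m : ℂ) with hd
  -- the function in a nice form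
  have hfun : (fun t : ℝ => lineSfr C Yf v (Function.update θ m t) l)
      = fun t : ℝ => (a + c * Complex.exp (Complex.I * (t : ℂ)))
          * (b + d * Complex.exp (-(Complex.I * (t : ℂ)))) := by
    funext t
    have h1 := sum_update_key C v θ l m t
    have h2 := sum_update_key Yf v θ l m t
    have hconjexp : (starRingEnd ℂ) (Complex.exp (Complex.I * (t : ℂ)))
        = Complex.exp (-(Complex.I * (t : ℂ))) := by
      rw [← Complex.exp_conj]; simp
    simp only [lineSfr, lineIfr, h1, h2, map_add, map_sub, _root_.map_mul,
      Complex.conj_ofReal, hconjexp, ha, hc, hb, hd]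
    ring
  rw [hfun]
  -- derivatives of the exponential factors
  have hE : HasDerivAt (fun t : ℝ => Complex.exp (Complex.I * (t : ℂ)))
      (Complex.I * Complex.exp (Complex.I * (θ m : ℂ))) (θ m) := by
    have h0 : HasDerivAt (fun z : ℂ => Complex.exp (Complex.I * z))
        (Complex.I * Complex.exp (Complex.I * (θ m : ℂ))) ((θ m : ℝ) : ℂ) := by
      have h := ((hasDerivAt_id ((θ m : ℝ) : ℂ)).const_mul Complex.I).cexp
      refine h.congr_deriv ?_
      simp only [id]; ring
    exact h0.comp_ofReal
  have hE' : HasDerivAt (fun t : ℝ => Complex.exp (-(Complex.I * (t : ℂ))))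
      (-(Complex.I) * Complex.exp (-(Complex.I * (θ m : ℂ)))) (θ m) := by
    have h0 : HasDerivAt (fun z : ℂ => Complex.exp (-(Complex.I * z)))
        (-(Complex.I) * Complex.exp (-(Complex.I * (θ m : ℂ)))) ((θ m : ℝ) : ℂ) := by
      have h := (((hasDerivAt_id ((θ m : ℝ) : ℂ)).const_mul Complex.I).neg).cexp
      refine h.congr_deriv ?_
      simp only [id, Pi.neg_apply]; ring
    exact h0.comp_ofReal
  have hD := ((hE.const_mul c).const_add a).mul ((hE'.const_mul d).const_add b)
  -- identify the derivative value
  have key1 : c * Complex.exp (Complex.I * (θ m : ℂ)) = C l m * busV v θ m := by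
    simp [hc, busV]; ring
  have key2 : d * Complex.exp (-(Complex.I * (θ m : ℂ)))
      = (starRingEnd ℂ) (Yf l m) * (starRingEnd ℂ) (busV v θ m) := by
    have : (starRingEnd ℂ) (busV v θ m)
        = (v m : ℂ) * Complex.exp (-(Complex.I * (θ m : ℂ))) := by
      simp [busV, ← Complex.exp_conj]
    rw [this, hd]; ring
  have key3 : a + c * Complex.exp (Complex.I * (θ m : ℂ)) = ∑ k, C l k * busV v θ k := by
    rw [key1, ha]; ring
  have key4 : b + d * Complex.exp (-(Complex.I * (θ m : ℂ)))
      = (starRingEnd ℂ) (lineIfr Yf v θ l) := by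
    rw [key2, hb, lineIfr, map_sub, _root_.map_mul]; ring
  have hconjVm : (starRingEnd ℂ) (busV v θ m)
      = (v m : ℂ) * Complex.exp (-(Complex.I * (θ m : ℂ))) := by
    simp [busV, ← Complex.exp_conj]
  have hVm : busV v θ m = (v m : ℂ) * Complex.exp (Complex.I * (θ m : ℂ)) := rfl
  refine hD.congr_deriv ?_
  rw [← key4, hconjVm, hVm, ← key3, ha, hb, hc, hd]
  ring
end

section
/- For all l ∈ n_l and m ∈ n_b, the partial derivative of the from-end complex line flow S^fr_l with respect to the voltage magnitude v_m exists and equals C_{l m}·exp(j·θ_m)·conj(I^fr_l) + (Σ_k C_{l k}·V_k)·conj((Y_f)_{l m})·conj(exp(j·θ_m)); i.e. the one-variable function t ↦ S^fr_l computed from the magnitude vector obtained by replacing v_m with t has this derivative at t = v_m. -/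
open Matrix

lemma hasDerivAt_sum_aux {nl nb : Type*} [Fintype nb] [DecidableEq nb]
    (A : Matrix nl nb ℂ) (v θ : nb → ℝ) (l : nl) (m : nb) :
    HasDerivAt (fun t : ℝ => ∑ k, A l k * busV (Function.update v m t) θ k)
      (A l m * Complex.exp (Complex.I * (θ m : ℂ))) (v m) := by
  have h : ∀ k : nb, HasDerivAt (fun t : ℝ => A l k * busV (Function.update v m t) θ k)
      (if k = m then A l k * Complex.exp (Complex.I * (θ k : ℂ)) else 0) (v m) := by
    intro k
    by_cases hk : k = m
    · subst hk
      simp only [busV, Function.update_self, if_pos rfl]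
      have h1 : HasDerivAt (fun t : ℝ => (t : ℂ)) 1 (v k) :=
        Complex.ofRealCLM.hasDerivAt
      have h2 := (h1.mul_const (Complex.exp (Complex.I * (θ k : ℂ)))).const_mul (A l k)
      simpa using h2
    · simp only [busV, Function.update_of_ne hk, if_neg hk]
      exact hasDerivAt_const _ _
  have := HasDerivAt.fun_sum (u := Finset.univ) (fun k _ => h k)
  simpa [Finset.sum_ite_eq'] using this

/-- Partial derivative of the from-end complex line flow `S^fr_l` with respect
to the voltage magnitude `v_m`. -/
theorem hasDerivAt_lineSfr_magnitude {nl nb : Type*} [Fintype nb] [DecidableEq nb]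
    (C Yf : Matrix nl nb ℂ) (v θ : nb → ℝ) (l : nl) (m : nb) :
    HasDerivAt (fun t : ℝ => lineSfr C Yf (Function.update v m t) θ l)
      (C l m * Complex.exp (Complex.I * (θ m : ℂ)) *
          (starRingEnd ℂ) (lineIfr Yf v θ l)
        + (∑ k, C l k * busV v θ k) * (starRingEnd ℂ) (Yf l m) *
            (starRingEnd ℂ) (Complex.exp (Complex.I * (θ m : ℂ))))
      (v m) := by
  have hA := hasDerivAt_sum_aux C v θ l m
  have hB := (hasDerivAt_sum_aux Yf v θ l m).star
  have := hA.mul hB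
  simp only [lineSfr, lineIfr] at *
  convert this using 2
  case e'_4 => rfl
  all_goals
    simp [Function.update_eq_self, _root_.map_mul, mul_comm, mul_assoc, mul_left_comm]
end

section
/- For all l ∈ n_l and m ∈ n_b, the partial derivative of the squared apparent from-end power flow |S^fr_l|² (the square of the complex absolute value, i.e. (Re S^fr_l)² + (Im S^fr_l)²) with respect to the angle θ_m exists and equals 2·Re( conj(S^fr_l) · j·( C_{l m}·V_m·conj(I^fr_l) − (Σ_k C_{l k}·V_k)·conj((Y_f)_{l m})·conj(V_m) ) ). -/
set_option maxRecDepth 8000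
set_option maxHeartbeats 1000000


open Matrix

lemma hasDerivAt_busV_update {nb : Type*} [DecidableEq nb] (v θ : nb → ℝ) (m k : nb) :
    HasDerivAt (fun t : ℝ => busV v (Function.update θ m t) k)
      (if k = m then Complex.I * busV v θ m else 0) (θ m) := by
  by_cases hk : k = m
  · subst hk
    have h1 : (fun t : ℝ => busV v (Function.update θ k t) k)
        = fun t : ℝ => (v k : ℂ) * Complex.exp (Complex.I * (t : ℂ)) := by
      funext t; simp [busV]
    rw [h1, if_pos rfl]
    have hc : HasDerivAt (fun t : ℝ => Complex.I * (t : ℂ)) Complex.I (θ k) := by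
      simpa using (Complex.ofRealCLM.hasDerivAt (x := θ k)).const_mul Complex.I
    have hexp := hc.cexp
    have := hexp.const_mul (v k : ℂ)
    simpa [busV, mul_comm, mul_left_comm, mul_assoc] using this
  · have h1 : (fun t : ℝ => busV v (Function.update θ m t) k)
        = fun _ : ℝ => busV v θ k := by
      funext t; simp [busV, Function.update_of_ne hk]
    rw [h1, if_neg hk]
    exact hasDerivAt_const _ _

/-- Partial derivative of the squared apparent from-end power flow `|S^fr_l|²`
(`normSq z = (re z)² + (im z)²`) with respect to the voltage angle `θ_m`. -/
theorem hasDerivAt_lineSfr_normSq_angle {nl nb : Type*} [Fintype nb] [DecidableEq nb]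
    (C Yf : Matrix nl nb ℂ) (v θ : nb → ℝ) (l : nl) (m : nb) :
    HasDerivAt (fun t : ℝ => Complex.normSq (lineSfr C Yf v (Function.update θ m t) l))
      (2 * ((starRingEnd ℂ) (lineSfr C Yf v θ l) *
          (Complex.I *
            (C l m * busV v θ m * (starRingEnd ℂ) (lineIfr Yf v θ l)
              - (∑ k, C l k * busV v θ k) * (starRingEnd ℂ) (Yf l m) *
                  (starRingEnd ℂ) (busV v θ m)))).re)
      (θ m) := by
  classical
  set Vm : ℂ := busV v θ m with hVm
  -- derivative of F(t) = ∑ C l k V_k(t)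
  have hsum : ∀ D : nl → nb → ℂ,
      (∑ k, D l k * (if k = m then Complex.I * busV v θ m else 0))
        = D l m * (Complex.I * Vm) := by
    intro D
    rw [Finset.sum_eq_single m (fun b _ hb => by rw [if_neg hb, mul_zero])
      (fun h => absurd (Finset.mem_univ m) h), if_pos rfl]
  have hF : HasDerivAt (fun t : ℝ => ∑ k, C l k * busV v (Function.update θ m t) k)
      (C l m * (Complex.I * Vm)) (θ m) := by
    have h := HasDerivAt.fun_sum
      (fun k (_ : k ∈ Finset.univ) => (hasDerivAt_busV_update v θ m k).const_mul (C l k))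
    exact hsum C ▸ h
  have hI : HasDerivAt (fun t : ℝ => lineIfr Yf v (Function.update θ m t) l)
      (Yf l m * (Complex.I * Vm)) (θ m) := by
    have h := HasDerivAt.fun_sum
      (fun k (_ : k ∈ Finset.univ) => (hasDerivAt_busV_update v θ m k).const_mul (Yf l k))
    exact hsum Yf ▸ h
  have hIc : HasDerivAt (fun t : ℝ => (starRingEnd ℂ) (lineIfr Yf v (Function.update θ m t) l))
      ((starRingEnd ℂ) (Yf l m * (Complex.I * Vm))) (θ m) := by
    exact hI.star
  -- derivative of S(t)
  set S' : ℂ := C l m * (Complex.I * Vm) * (starRingEnd ℂ) (lineIfr Yf v θ l)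
      + (∑ k, C l k * busV v θ k) * (starRingEnd ℂ) (Yf l m * (Complex.I * Vm)) with hS'
  have hS : HasDerivAt (fun t : ℝ => lineSfr C Yf v (Function.update θ m t) l) S' (θ m) := by
    have h := hF.mul hIc
    rw [Function.update_eq_self] at h
    exact h
  have hSc : HasDerivAt
      (fun t : ℝ => (starRingEnd ℂ) (lineSfr C Yf v (Function.update θ m t) l))
      ((starRingEnd ℂ) S') (θ m) := by
    exact hS.star
  have hP := hS.fun_mul hSc
  have hre := Complex.reCLM.hasFDerivAt.comp_hasDerivAt (θ m) hP
  have key : (fun t : ℝ =>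
      Complex.reCLM ((lineSfr C Yf v (Function.update θ m t) l) *
        (starRingEnd ℂ) (lineSfr C Yf v (Function.update θ m t) l)))
      = fun t : ℝ => Complex.normSq (lineSfr C Yf v (Function.update θ m t) l) := by
    funext t
    rw [Complex.reCLM_apply, Complex.mul_conj]; simp
  simp only [Function.comp_def, Complex.reCLM_apply] at hre
  have key' : ∀ t : ℝ, (lineSfr C Yf v (Function.update θ m t) l *
      (starRingEnd ℂ) (lineSfr C Yf v (Function.update θ m t) l)).re
      = Complex.normSq (lineSfr C Yf v (Function.update θ m t) l) := fun t => by
    rw [Complex.mul_conj]; simp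
  simp only [key'] at hre
  refine hre.congr_deriv (Eq.symm ?_)
  set S : ℂ := lineSfr C Yf v θ l with hSdef
  have hS'eq : S' = Complex.I *
      (C l m * Vm * (starRingEnd ℂ) (lineIfr Yf v θ l)
        - (∑ k, C l k * busV v θ k) * (starRingEnd ℂ) (Yf l m) * (starRingEnd ℂ) Vm) := by
    rw [hS']
    simp only [_root_.map_mul, Complex.conj_I]
    ring
  have h1 : lineSfr C Yf v (Function.update θ m (θ m)) l = S := by
    rw [Function.update_eq_self]
  rw [h1]
  have h2 : S' * (starRingEnd ℂ) S + S * (starRingEnd ℂ) S'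
      = (starRingEnd ℂ) S * S' + (starRingEnd ℂ) ((starRingEnd ℂ) S * S') := by
    rw [_root_.map_mul, Complex.conj_conj]; ring
  rw [← hS'eq, h2, Complex.add_re, Complex.conj_re, two_mul]
end

section
/- Let λ : n_b → ℝ and, for n ∈ n_b, define the n-th component of the angle gradient of the weighted power injection, W_n(θ) := j·λ_n·V_n·conj(I_n) − j·conj(V_n)·Σ_i λ_i·V_i·conj(Y_{i n}) (this equals Σ_i λ_i·∂S_i/∂θ_n). Then for all m, n ∈ n_b, the partial derivative of W_n with respect to the angle θ_m exists and equals −[m = n]·λ_m·V_m·conj(I_m) + λ_n·V_n·conj(Y_{n m})·conj(V_m) + λ_m·V_m·conj(Y_{m n})·conj(V_n) − [m = n]·conj(V_n)·Σ_i λ_i·V_i·conj(Y_{i n}); this is the (m, n) entry of the angle–angle Hessian G_ΘΘ(λ) = diag(conj(V))·(conj(Y)ᵀ·diag(V)·diag(λ) − diag(conj(Y)ᵀ·diag(V)·λ)) + diag(λ)·diag(V)·(conj(Y)·diag(conj(V)) − diag(conj(I))). -/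
open Matrix

/-- `n`-th component of the angle gradient of the `λ`-weighted power injection:
`W_n(θ) = j λ_n V_n conj(I_n) - j conj(V_n) Σ_i λ_i V_i conj(Y_{i n})`. -/
noncomputable def gradThetaW {nb : Type*} [Fintype nb] (Y : Matrix nb nb ℂ)
    (lam : nb → ℝ) (v θ : nb → ℝ) (n : nb) : ℂ :=
  Complex.I * (lam n : ℂ) * busV v θ n * (starRingEnd ℂ) (busI Y v θ n)
    - Complex.I * (starRingEnd ℂ) (busV v θ n) *
        ∑ i, (lam i : ℂ) * busV v θ i * (starRingEnd ℂ) (Y i n)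

lemma conj_hasDerivAt {f : ℝ → ℂ} {f' : ℂ} {x : ℝ} (h : HasDerivAt f f' x) :
    HasDerivAt (fun t => (starRingEnd ℂ) (f t)) ((starRingEnd ℂ) f') x := by
  have := (Complex.conjCLE.hasFDerivAt (x := f x)).comp_hasDerivAt x h
  exact this

lemma hasDerivAt_busV {nb : Type*} [DecidableEq nb] (v θ : nb → ℝ) (m k : nb) :
    HasDerivAt (fun t => busV v (Function.update θ m t) k)
      (if k = m then Complex.I * busV v θ k else 0) (θ m) := by
  rcases eq_or_ne k m with rfl | hk
  · simp only [busV, Function.update_self, if_pos rfl]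
    have h1 : HasDerivAt (fun t : ℝ => Complex.I * (t : ℂ)) Complex.I (θ k) := by
      simpa using ((hasDerivAt_id (θ k)).ofReal_comp).const_mul Complex.I
    have := (h1.cexp).const_mul (v k : ℂ)
    simpa [busV] using this.congr_deriv (by ring)
  · simp only [busV, Function.update_of_ne hk, if_neg hk]
    exact hasDerivAt_const _ _

lemma hasDerivAt_busI {nb : Type*} [Fintype nb] [DecidableEq nb]
    (Y : Matrix nb nb ℂ) (v θ : nb → ℝ) (m i : nb) :
    HasDerivAt (fun t => busI Y v (Function.update θ m t) i)
      (Y i m * (Complex.I * busV v θ m)) (θ m) := by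
  have h := HasDerivAt.fun_sum (fun k (_ : k ∈ Finset.univ) =>
    (hasDerivAt_busV v θ m k).const_mul (Y i k))
  simpa [busI, mul_ite, Finset.sum_ite_eq'] using h

theorem hasDerivAt_gradThetaW_angle' {nb : Type*} [Fintype nb] [DecidableEq nb]
    (Y : Matrix nb nb ℂ) (lam : nb → ℝ) (v θ : nb → ℝ) (m n : nb) :
    HasDerivAt (fun t : ℝ =>
      Complex.I * (lam n : ℂ) * busV v (Function.update θ m t) n *
          (starRingEnd ℂ) (busI Y v (Function.update θ m t) n)
        - Complex.I * (starRingEnd ℂ) (busV v (Function.update θ m t) n) *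
            ∑ i, (lam i : ℂ) * busV v (Function.update θ m t) i *
              (starRingEnd ℂ) (Y i n))
      (-(if m = n then 1 else 0) * (lam m : ℂ) * busV v θ m *
          (starRingEnd ℂ) (busI Y v θ m)
        + (lam n : ℂ) * busV v θ n * (starRingEnd ℂ) (Y n m) *
            (starRingEnd ℂ) (busV v θ m)
        + (lam m : ℂ) * busV v θ m * (starRingEnd ℂ) (Y m n) *
            (starRingEnd ℂ) (busV v θ n)
        - (if m = n then 1 else 0) * (starRingEnd ℂ) (busV v θ n) *
            ∑ i, (lam i : ℂ) * busV v θ i * (starRingEnd ℂ) (Y i n))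
      (θ m) := by
  have hVn := hasDerivAt_busV v θ m n
  have hIc := conj_hasDerivAt (hasDerivAt_busI Y v θ m n)
  have hA := ((hVn.const_mul (Complex.I * (lam n : ℂ))).fun_mul hIc)
  have hVnc := conj_hasDerivAt hVn
  have hSum := HasDerivAt.fun_sum (fun i (_ : i ∈ Finset.univ) =>
    ((hasDerivAt_busV v θ m i).const_mul (lam i : ℂ)).mul_const ((starRingEnd ℂ) (Y i n)))
  have hB := (hVnc.const_mul Complex.I).fun_mul hSum
  have h := hA.fun_sub hB
  simp only [Function.update_eq_self] at h
  refine h.congr_deriv ?_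
  simp only [_root_.map_mul, apply_ite (starRingEnd ℂ), map_zero, Complex.conj_I,
    mul_ite, ite_mul, zero_mul, mul_zero, Finset.sum_ite_eq', Finset.mem_univ, if_true]
  rcases eq_or_ne m n with rfl | hmn
  · simp only [if_pos rfl]
    ring_nf
    simp [Complex.I_sq]
    ring
  · simp only [if_neg hmn, if_neg (Ne.symm hmn)]
    ring_nf
    simp [Complex.I_sq]

/-- The `(m, n)` entry of the angle–angle Hessian `G_ΘΘ(λ)`: partial derivative
of `W_n` with respect to the angle `θ_m`. -/
theorem hasDerivAt_gradThetaW_angle {nb : Type*} [Fintype nb] [DecidableEq nb]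
    (Y : Matrix nb nb ℂ) (lam : nb → ℝ) (v θ : nb → ℝ) (m n : nb) :
    HasDerivAt (fun t : ℝ => gradThetaW Y lam v (Function.update θ m t) n)
      (-(if m = n then 1 else 0) * (lam m : ℂ) * busV v θ m *
          (starRingEnd ℂ) (busI Y v θ m)
        + (lam n : ℂ) * busV v θ n * (starRingEnd ℂ) (Y n m) *
            (starRingEnd ℂ) (busV v θ m)
        + (lam m : ℂ) * busV v θ m * (starRingEnd ℂ) (Y m n) *
            (starRingEnd ℂ) (busV v θ n)
        - (if m = n then 1 else 0) * (starRingEnd ℂ) (busV v θ n) *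
            ∑ i, (lam i : ℂ) * busV v θ i * (starRingEnd ℂ) (Y i n))
      (θ m) := by
  exact hasDerivAt_gradThetaW_angle' Y lam v θ m n
end

section
/- Let λ : n_b → ℝ, let F_k = exp(j·θ_k), and for n ∈ n_b define the n-th component of the magnitude gradient of the weighted power injection, U_n(v) := λ_n·F_n·conj(I_n) + conj(F_n)·Σ_i λ_i·V_i·conj(Y_{i n}) (this equals Σ_i λ_i·∂S_i/∂v_n). Then for all m, n ∈ n_b, the partial derivative of U_n with respect to the voltage magnitude v_m exists and equals λ_n·F_n·conj(Y_{n m})·conj(F_m) + λ_m·F_m·conj(Y_{m n})·conj(F_n); this is the (m, n) entry of the magnitude–magnitude Hessian diag(v)⁻¹·( diag(λ)·diag(V)·conj(Y)·diag(conj(V)) + diag(conj(V))·conj(Y)ᵀ·diag(V)·diag(λ) )·diag(v)⁻¹. -/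
open Matrix

/-- `n`-th component of the magnitude gradient of the `λ`-weighted power
injection: `U_n(v) = λ_n F_n conj(I_n) + conj(F_n) Σ_i λ_i V_i conj(Y_{i n})`,
where `F_k = exp(j θ_k)`. -/
noncomputable def gradVU {nb : Type*} [Fintype nb] (Y : Matrix nb nb ℂ)
    (lam : nb → ℝ) (v θ : nb → ℝ) (n : nb) : ℂ :=
  (lam n : ℂ) * Complex.exp (Complex.I * (θ n : ℂ)) * (starRingEnd ℂ) (busI Y v θ n)
    + (starRingEnd ℂ) (Complex.exp (Complex.I * (θ n : ℂ))) *
        ∑ i, (lam i : ℂ) * busV v θ i * (starRingEnd ℂ) (Y i n)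

/-- The `(m, n)` entry of the magnitude–magnitude Hessian: partial derivative of
`U_n` with respect to the voltage magnitude `v_m`. -/
theorem hasDerivAt_gradVU_magnitude {nb : Type*} [Fintype nb] [DecidableEq nb]
    (Y : Matrix nb nb ℂ) (lam : nb → ℝ) (v θ : nb → ℝ)
    (hv : ∀ k, v k ≠ 0) (m n : nb) :
    HasDerivAt (fun t : ℝ => gradVU Y lam (Function.update v m t) θ n)
      ((lam n : ℂ) * Complex.exp (Complex.I * (θ n : ℂ)) *
          (starRingEnd ℂ) (Y n m) *
          (starRingEnd ℂ) (Complex.exp (Complex.I * (θ m : ℂ)))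
        + (lam m : ℂ) * Complex.exp (Complex.I * (θ m : ℂ)) *
            (starRingEnd ℂ) (Y m n) *
            (starRingEnd ℂ) (Complex.exp (Complex.I * (θ n : ℂ))))
      (v m) := by
  have hV : ∀ k, HasDerivAt (fun t : ℝ => busV (Function.update v m t) θ k)
      (if k = m then Complex.exp (Complex.I * (θ m : ℂ)) else 0) (v m) := by
    intro k
    unfold busV
    by_cases hk : k = m
    · subst hk
      simp only [Function.update_self, if_pos rfl]
      simpa using (Complex.ofRealCLM.hasDerivAt (x := v k)).mul_const
        (Complex.exp (Complex.I * (θ k : ℂ)))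
    · simp only [Function.update_of_ne hk, if_neg hk]
      exact hasDerivAt_const _ _
  have hI : HasDerivAt (fun t : ℝ => busI Y (Function.update v m t) θ n)
      (Y n m * Complex.exp (Complex.I * (θ m : ℂ))) (v m) := by
    have := HasDerivAt.fun_sum (fun k (_ : k ∈ Finset.univ) => (hV k).const_mul (Y n k))
    simpa [busI, mul_ite, Finset.sum_ite_eq'] using this
  have h1 : HasDerivAt (fun t : ℝ =>
      (lam n : ℂ) * Complex.exp (Complex.I * (θ n : ℂ)) *
        (starRingEnd ℂ) (busI Y (Function.update v m t) θ n))
      ((lam n : ℂ) * Complex.exp (Complex.I * (θ n : ℂ)) *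
        (starRingEnd ℂ) (Y n m * Complex.exp (Complex.I * (θ m : ℂ)))) (v m) :=
    hI.star.const_mul _
  have h2 : HasDerivAt (fun t : ℝ =>
      (starRingEnd ℂ) (Complex.exp (Complex.I * (θ n : ℂ))) *
        ∑ i, (lam i : ℂ) * busV (Function.update v m t) θ i * (starRingEnd ℂ) (Y i n))
      ((starRingEnd ℂ) (Complex.exp (Complex.I * (θ n : ℂ))) *
        ((lam m : ℂ) * Complex.exp (Complex.I * (θ m : ℂ)) * (starRingEnd ℂ) (Y m n)))
      (v m) := by
    have := HasDerivAt.fun_sum (fun i (_ : i ∈ Finset.univ) =>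
      (((hV i).const_mul ((lam i : ℂ))).mul_const ((starRingEnd ℂ) (Y i n))))
    have h := this.const_mul ((starRingEnd ℂ) (Complex.exp (Complex.I * (θ n : ℂ))))
    convert h using 1
    case e'_4 => rfl
    simp [mul_ite, ite_mul, Finset.sum_ite_eq']
  have := h1.add h2
  convert this using 1
  case e'_4 => rfl
  case e'_8 => rfl
  simp [_root_.map_mul]; ring
end

section
/- Let λ : n_b → ℝ, let F_k = exp(j·θ_k), and for n ∈ n_b define the n-th component of the angle gradient of the weighted power injection, W_n := j·λ_n·V_n·conj(I_n) − j·conj(V_n)·Σ_i λ_i·V_i·conj(Y_{i n}) (this equals Σ_i λ_i·∂S_i/∂θ_n), regarded as a function of the magnitude vector v. Then for all m, n ∈ n_b, the partial derivative of W_n with respect to the voltage magnitude v_m exists and equals j·[m = n]·λ_n·F_n·conj(I_n) + j·λ_n·V_n·conj(Y_{n m})·conj(F_m) − j·[m = n]·conj(F_n)·Σ_i λ_i·V_i·conj(Y_{i n}) − j·conj(V_n)·λ_m·F_m·conj(Y_{m n}); this is the (m, n) entry of the mixed magnitude–angle Hessian j·diag(v)⁻¹·( diag(conj(V))·(conj(Y)ᵀ·diag(V)·diag(λ)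 − diag(conj(Y)ᵀ·diag(V)·λ)) − diag(λ)·diag(V)·(conj(Y)·diag(conj(V)) − diag(conj(I))) ). -/
open Matrix

lemma hV {nb : Type*} [DecidableEq nb] (v θ : nb → ℝ) (m k : nb) :
    HasDerivAt (fun t : ℝ => busV (Function.update v m t) θ k)
      ((if m = k then 1 else 0) * Complex.exp (Complex.I * (θ k : ℂ))) (v m) := by
  unfold busV
  by_cases h : m = k
  · subst h
    simp only [Function.update_self, if_pos rfl, one_mul]
    exact (Complex.ofRealCLM.hasDerivAt).mul_const _
  · simp only [Function.update_of_ne (Ne.symm h), if_neg h, zero_mul]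
    exact hasDerivAt_const _ _

/-- The `(m, n)` entry of the mixed magnitude–angle Hessian: partial derivative
of `W_n` with respect to the voltage magnitude `v_m`, where
`F_k = exp(j θ_k)`. -/
theorem hasDerivAt_gradThetaW_magnitude {nb : Type*} [Fintype nb] [DecidableEq nb]
    (Y : Matrix nb nb ℂ) (lam : nb → ℝ) (v θ : nb → ℝ)
    (hv : ∀ k, v k ≠ 0) (m n : nb) :
    HasDerivAt (fun t : ℝ => gradThetaW Y lam (Function.update v m t) θ n)
      (Complex.I * (if m = n then 1 else 0) * (lam n : ℂ) *
          Complex.exp (Complex.I * (θ n : ℂ)) * (starRingEnd ℂ) (busI Y v θ n)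
        + Complex.I * (lam n : ℂ) * busV v θ n * (starRingEnd ℂ) (Y n m) *
            (starRingEnd ℂ) (Complex.exp (Complex.I * (θ m : ℂ)))
        - Complex.I * (if m = n then 1 else 0) *
            (starRingEnd ℂ) (Complex.exp (Complex.I * (θ n : ℂ))) *
            (∑ i, (lam i : ℂ) * busV v θ i * (starRingEnd ℂ) (Y i n))
        - Complex.I * (starRingEnd ℂ) (busV v θ n) * (lam m : ℂ) *
            Complex.exp (Complex.I * (θ m : ℂ)) * (starRingEnd ℂ) (Y m n))
      (v m) := by
  set F : nb → ℂ := fun k => Complex.exp (Complex.I * (θ k : ℂ)) with hF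
  have hI : HasDerivAt (fun t : ℝ => busI Y (Function.update v m t) θ n)
      (Y n m * F m) (v m) := by
    have := HasDerivAt.fun_sum (u := Finset.univ)
      (fun k _ => ((hV v θ m k).const_mul (Y n k)))
    convert this using 1
    · rfl
    · rfl
    simp [hF, Finset.mul_sum, mul_ite, ite_mul, eq_comm]
  have hS : HasDerivAt
      (fun t : ℝ => ∑ i, (lam i : ℂ) * busV (Function.update v m t) θ i *
        (starRingEnd ℂ) (Y i n))
      ((lam m : ℂ) * F m * (starRingEnd ℂ) (Y m n)) (v m) := by
    have := HasDerivAt.fun_sum (u := Finset.univ)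
      (fun i _ => (((hV v θ m i).const_mul ((lam i : ℂ))).mul_const ((starRingEnd ℂ) (Y i n))))
    convert this using 1
    · rfl
    simp [hF, mul_ite, ite_mul, eq_comm]
  have hVn := hV v θ m n
  have h1 : HasDerivAt
      (fun t : ℝ => Complex.I * (lam n : ℂ) * busV (Function.update v m t) θ n *
        (starRingEnd ℂ) (busI Y (Function.update v m t) θ n))
      (Complex.I * (lam n : ℂ) * ((if m = n then 1 else 0) * F n) *
          (starRingEnd ℂ) (busI Y v θ n)
        + Complex.I * (lam n : ℂ) * busV v θ n * (starRingEnd ℂ) (Y n m * F m)) (v m) := by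
    have := ((hVn.const_mul (Complex.I * (lam n : ℂ))).fun_mul hI.star)
    simpa [Function.update_eq_self, mul_comm, mul_assoc, mul_left_comm] using this
  have h2 : HasDerivAt
      (fun t : ℝ => Complex.I * (starRingEnd ℂ) (busV (Function.update v m t) θ n) *
        ∑ i, (lam i : ℂ) * busV (Function.update v m t) θ i * (starRingEnd ℂ) (Y i n))
      (Complex.I * (starRingEnd ℂ) ((if m = n then 1 else 0) * F n) *
          (∑ i, (lam i : ℂ) * busV v θ i * (starRingEnd ℂ) (Y i n))
        + Complex.I * (starRingEnd ℂ) (busV v θ n) *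
            ((lam m : ℂ) * F m * (starRingEnd ℂ) (Y m n))) (v m) := by
    have := ((hVn.star.const_mul Complex.I).fun_mul hS)
    simpa [Function.update_eq_self, mul_comm, mul_assoc, mul_left_comm] using this
  have := h1.sub h2
  convert this using 1
  · rfl
  · rfl
  simp only [hF, _root_.map_mul, apply_ite (starRingEnd ℂ), _root_.map_one, _root_.map_zero]
  push_cast
  by_cases h : m = n <;> simp [h] <;> ring
end
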